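/- Let α ∈ ℝ be irrational and let φ_t(x, y, z) = (x + t, y + αt, z) be the flow on (AddCircle (1:ℝ))³ which is a linear flow with slope α in the first two coordinates and fixes the third coordinate. Then for every point p = (x, y, z) ∈ (AddCircle 1)³, the ω-limit set ω(p) equals the torus fibre {(x', y', z') ∈ (AddCircle 1)³ : z' = z}. -/

import Mathlib

open Filter Set


/-- Stepping lemma: with positive step `d`, natural multiples of `d` hit every
residue class mod 1 up to error `d`, with arbitrarily large multiplier. -/
lemma linT2xS1_step {d : ℝ} (hd : 0 < d) (c : ℝ) (N : ℕ) :
    ∃ j : ℕ, N ≤ j ∧ ∃ L : ℤ, 0 ≤ (j : ℝ) * d - L - c ∧ (j : ℝ) * d - L - c < d := by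
  set L : ℤ := ⌈(N : ℝ) * d + 1 - c⌉ with hLdef
  have hL : (N : ℝ) * d + 1 - c ≤ L := Int.le_ceil _
  set T : ℝ := c + L with hT
  have hT1 : (N : ℝ) * d + 1 ≤ T := by rw [hT]; linarith
  have hTpos : 0 < T := lt_of_lt_of_le (by positivity) hT1
  set j : ℤ := ⌈T / d⌉ with hjdef
  have hj0 : 0 < j := Int.ceil_pos.2 (div_pos hTpos hd)
  have hjge : T / d ≤ (j : ℝ) := Int.le_ceil _
  have hjlt : (j : ℝ) < T / d + 1 := Int.ceil_lt_add_one _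
  have hjd_ge : T ≤ (j : ℝ) * d := by
    rw [div_le_iff₀ hd] at hjge; linarith
  have hjd_lt : (j : ℝ) * d < T + d := by
    have := mul_lt_mul_of_pos_right hjlt hd
    rw [add_mul, div_mul_cancel₀ _ hd.ne', one_mul] at this; linarith
  have hjN : (N : ℝ) < (j : ℝ) := by nlinarith
  have hjNnat : N ≤ j.toNat := by
    have : (N : ℤ) < j := by exact_mod_cast hjN
    omega
  refine ⟨j.toNat, hjNnat, L, ?_, ?_⟩
  · have : ((j.toNat : ℤ) : ℝ) = (j : ℝ) := by rw [Int.toNat_of_nonneg hj0.le]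
    push_cast at this ⊢
    rw [this]; rw [hT] at hjd_ge; linarith
  · have : ((j.toNat : ℤ) : ℝ) = (j : ℝ) := by rw [Int.toNat_of_nonneg hj0.le]
    push_cast at this ⊢
    rw [this]; rw [hT] at hjd_lt; linarith

/-- For irrational `α`, natural multiples of `α` approximate every real number
mod 1, with arbitrarily large multiplier. -/
lemma linT2xS1_approx {α : ℝ} (hα : Irrational α) (c : ℝ) {ε : ℝ} (hε : 0 < ε)
    (N : ℕ) : ∃ n : ℕ, N ≤ n ∧ ∃ j : ℤ, |(n : ℝ) * α - j - c| < ε := by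
  obtain ⟨n0, hn0⟩ := exists_nat_gt (1 / ε)
  have hn0pos : 0 < n0 := by
    rcases Nat.eq_zero_or_pos n0 with h | h
    · subst h
      have h1 : (0 : ℝ) < 1 / ε := by positivity
      simp only [Nat.cast_zero] at hn0
      linarith
    · exact h
  obtain ⟨k, hk0, hkn, hk⟩ := Real.exists_nat_abs_mul_sub_round_le α hn0pos
  set d : ℝ := (k : ℝ) * α - round ((k : ℝ) * α) with hddef
  have hdirr : Irrational d := (hα.natCast_mul hk0.ne').sub_intCast _
  have hdne : d ≠ 0 := fun h => by
    rw [h] at hdirr; exact hdirr ⟨0, by norm_num⟩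
  have hdlt : |d| < ε := by
    refine lt_of_le_of_lt hk ?_
    rw [div_lt_iff₀ (by positivity)]
    rw [div_lt_iff₀ hε] at hn0
    nlinarith
  rcases hdne.lt_or_gt with hdneg | hdpos
  · -- d < 0 : apply stepping lemma to -d with target -c
    obtain ⟨j', hj'N, L, h0, h1⟩ := linT2xS1_step (neg_pos.2 hdneg) (-c) N
    refine ⟨j' * k, le_trans hj'N (Nat.le_mul_of_pos_right _ hk0), 
      j' * round ((k : ℝ) * α) - L, ?_⟩
    have key : (↑(j' * k) : ℝ) * α - (((j' : ℤ) * round ((k : ℝ) * α) - L : ℤ) : ℝ) - c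
        = -((j' : ℝ) * (-d) - L - (-c)) := by
      push_cast
      rw [hddef]; ring
    rw [key, abs_neg, abs_of_nonneg h0]
    calc (j' : ℝ) * (-d) - L - (-c) < -d := h1
      _ ≤ |d| := by rw [abs_of_neg hdneg]
      _ < ε := hdlt
  · -- d > 0
    obtain ⟨j', hj'N, L, h0, h1⟩ := linT2xS1_step hdpos c N
    refine ⟨j' * k, le_trans hj'N (Nat.le_mul_of_pos_right _ hk0),
      j' * round ((k : ℝ) * α) + L, ?_⟩
    have key : (↑(j' * k) : ℝ) * α - (((j' : ℤ) * round ((k : ℝ) * α) + L : ℤ) : ℝ) - c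
        = (j' : ℝ) * d - L - c := by
      push_cast
      rw [hddef]; ring
    rw [key, abs_of_nonneg h0]
    calc (j' : ℝ) * d - L - c < d := h1
      _ ≤ |d| := le_abs_self d
      _ < ε := hdlt

/-- On the circle `ℝ/ℤ`, for irrational `α` the forward orbit `n ↦ nα` with
`n ≥ N` meets every neighbourhood of every point. -/
lemma linT2xS1_circle_approx {α : ℝ} (hα : Irrational α) (c : AddCircle (1 : ℝ))
    {V : Set (AddCircle (1 : ℝ))} (hV : V ∈ nhds c) (N : ℕ) :
    ∃ n : ℕ, N ≤ n ∧ (((n : ℝ) * α : ℝ) : AddCircle (1 : ℝ)) ∈ V := by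
  obtain ⟨c₀, rfl⟩ := QuotientAddGroup.mk'_surjective (AddSubgroup.zmultiples (1 : ℝ)) c
  have hcont : Continuous ((↑·) : ℝ → AddCircle (1 : ℝ)) :=
    AddCircle.continuous_mk' 1
  have hpre : ((↑·) : ℝ → AddCircle (1 : ℝ)) ⁻¹' V ∈ nhds c₀ :=
    hcont.continuousAt.preimage_mem_nhds hV
  obtain ⟨ε, hε, hball⟩ := Metric.mem_nhds_iff.1 hpre
  obtain ⟨n, hnN, j, hj⟩ := linT2xS1_approx hα c₀ hε N
  refine ⟨n, hnN, ?_⟩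
  have hmem : ((n : ℝ) * α - j) ∈ ((↑·) : ℝ → AddCircle (1 : ℝ)) ⁻¹' V := by
    apply hball
    rw [Metric.mem_ball, Real.dist_eq]
    exact hj
  have hcast : ((((n : ℝ) * α - j) : ℝ) : AddCircle (1 : ℝ))
      = (((n : ℝ) * α : ℝ) : AddCircle (1 : ℝ)) := by
    have hj0 : (((j : ℝ)) : AddCircle (1 : ℝ)) = 0 :=
      (AddCircle.coe_eq_zero_iff _).2 ⟨j, by simp⟩
    rw [sub_eq_add_neg, AddCircle.coe_add]
    have h2 : (((-(j : ℝ)) : ℝ) : AddCircle (1 : ℝ)) = 0 :=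
      (AddCircle.coe_eq_zero_iff _).2 ⟨-j, by simp⟩
    rw [h2, add_zero]
  rw [← hcast]
  exact hmem


/-- The flow on `(ℝ/ℤ)³` which is the linear flow with slope `α` in the first two
coordinates and fixes the third coordinate. -/
noncomputable def linearFlowT2xS1 (α : ℝ) (t : ℝ)
    (q : AddCircle (1 : ℝ) × AddCircle (1 : ℝ) × AddCircle (1 : ℝ)) :
    AddCircle (1 : ℝ) × AddCircle (1 : ℝ) × AddCircle (1 : ℝ) :=
  (q.1 + (t : AddCircle (1 : ℝ)), q.2.1 + ((α * t : ℝ) : AddCircle (1 : ℝ)), q.2.2)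

/-- for irrational `α`, the ω-limit set of any point `(x, y, z)` of
`(ℝ/ℤ)³` under the flow `φ_t(x, y, z) = (x + t, y + αt, z)` is the torus fibre
`{(x', y', z') : z' = z}`. -/
theorem linear_flow_T2xS1_omegaLimit (α : ℝ) (hα : Irrational α)
    (p : AddCircle (1 : ℝ) × AddCircle (1 : ℝ) × AddCircle (1 : ℝ)) :
    omegaLimit Filter.atTop (linearFlowT2xS1 α) {p} =
      {q : AddCircle (1 : ℝ) × AddCircle (1 : ℝ) × AddCircle (1 : ℝ) | q.2.2 = p.2.2} := by
  ext q
  rw [mem_omegaLimit_singleton_iff_map_cluster_point, mapClusterPt_iff_frequently]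
  constructor
  · intro h
    by_contra hne
    have hopen : IsOpen {r : AddCircle (1 : ℝ) × AddCircle (1 : ℝ) × AddCircle (1 : ℝ) |
        r.2.2 ≠ p.2.2} :=
      (isClosed_singleton.preimage (continuous_snd.comp continuous_snd)).isOpen_compl
    have hmem : {r : AddCircle (1 : ℝ) × AddCircle (1 : ℝ) × AddCircle (1 : ℝ) |
        r.2.2 ≠ p.2.2} ∈ nhds q := hopen.mem_nhds hne
    obtain ⟨t, ht⟩ := (h _ hmem).exists
    exact ht rfl
  · intro hq s hs
    rw [frequently_atTop]
    intro A
    -- decompose the neighbourhood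
    rw [show q = (q.1, q.2.1, q.2.2) from rfl, nhds_prod_eq, nhds_prod_eq] at hs
    obtain ⟨U, hU, v, hv, hUv⟩ := Filter.mem_prod_iff.1 hs
    obtain ⟨V, hV, W, hW, hVW⟩ := Filter.mem_prod_iff.1 hv
    -- lift the first target coordinate
    obtain ⟨s₀, hs₀⟩ := QuotientAddGroup.mk'_surjective
      (AddSubgroup.zmultiples (1 : ℝ)) (q.1 - p.1)
    -- translate V to a neighbourhood of the rotation target
    set g : AddCircle (1 : ℝ) → AddCircle (1 : ℝ) :=
      fun w => p.2.1 + ((α * s₀ : ℝ) : AddCircle (1 : ℝ)) + w with hg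
    have hgcont : Continuous g := continuous_const.add continuous_id
    set c : AddCircle (1 : ℝ) := q.2.1 - p.2.1 - ((α * s₀ : ℝ) : AddCircle (1 : ℝ))
      with hc
    have hs₀' : ((s₀ : ℝ) : AddCircle (1 : ℝ)) = q.1 - p.1 := hs₀
    have hgc : g c = q.2.1 := by
      show p.2.1 + ((α * s₀ : ℝ) : AddCircle (1 : ℝ))
        + (q.2.1 - p.2.1 - ((α * s₀ : ℝ) : AddCircle (1 : ℝ))) = q.2.1
      abel
    have hV' : g ⁻¹' V ∈ nhds c := by
      apply hgcont.continuousAt.preimage_mem_nhds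
      rw [hgc]; exact hV
    obtain ⟨N, hN⟩ := exists_nat_ge (A - s₀)
    obtain ⟨n, hnN, hmem⟩ := linT2xS1_circle_approx hα c hV' N
    refine ⟨s₀ + n, ?_, ?_⟩
    · have : (N : ℝ) ≤ n := Nat.cast_le.2 hnN
      linarith
    · apply hUv
      refine ⟨?_, ?_⟩
      · -- first coordinate: exactly q.1
        have hn0 : (((n : ℝ)) : AddCircle (1 : ℝ)) = 0 :=
          (AddCircle.coe_eq_zero_iff _).2 ⟨n, by simp⟩
        have : p.1 + ((s₀ + n : ℝ) : AddCircle (1 : ℝ)) = q.1 := by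
          rw [AddCircle.coe_add, hn0, add_zero, hs₀']
          abel
        show (linearFlowT2xS1 α (s₀ + n) p).1 ∈ U
        rw [show (linearFlowT2xS1 α (s₀ + n) p).1
          = p.1 + ((s₀ + n : ℝ) : AddCircle (1 : ℝ)) from rfl, this]
        exact mem_of_mem_nhds hU
      · apply hVW
        refine ⟨?_, ?_⟩
        · -- second coordinate
          show (linearFlowT2xS1 α (s₀ + n) p).2.1 ∈ V
          have hsplit : ((α * (s₀ + n) : ℝ) : AddCircle (1 : ℝ))
              = ((α * s₀ : ℝ) : AddCircle (1 : ℝ))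
                + (((n : ℝ) * α : ℝ) : AddCircle (1 : ℝ)) := by
            rw [← AddCircle.coe_add]
            congr 1
            ring
          have : (linearFlowT2xS1 α (s₀ + n) p).2.1
              = g (((n : ℝ) * α : ℝ) : AddCircle (1 : ℝ)) := by
            rw [hg]
            show p.2.1 + ((α * (s₀ + n) : ℝ) : AddCircle (1 : ℝ)) = _
            rw [hsplit]
            abel
          rw [this]
          exact hmem
        · show (linearFlowT2xS1 α (s₀ + n) p).2.2 ∈ W
          rw [show (linearFlowT2xS1 α (s₀ + n) p).2.2 = p.2.2 from rfl, ← hq]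
          exact mem_of_mem_nhds hW
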